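/- Let (W,R) be Euclidean, s ∈ W, and F_m^n a flower with n ∈ ℕ. If there exists a surjective bounded morphism f from the generated subframe (W_s, R_s) to F_m^n such that f(s) generates F_m^n (i.e., f(s) = 0), then W_s = {s} ∪ C and R_s = ({s} × B) ∪ (C × C) for some sets B ⊆ C with s ∉ C, |B| ≥ m, and |C \ B| ≥ n. -/

import Mathlib

/-- `f` is a bounded morphism from the frame `(W',R')` to the frame `(W,R)`. -/
def IsBoundedMorphism {α β : Type*} (W' : Set α) (R' : α → α → Prop)
    (W : Set β) (R : β → β → Prop) (f : α → β) : Prop :=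
  (∀ x ∈ W', f x ∈ W) ∧
  (∀ x ∈ W', ∀ y ∈ W', R' x y → R (f x) (f y)) ∧
  (∀ x ∈ W', ∀ t ∈ W, R (f x) t → ∃ y ∈ W', R' x y ∧ f y = t)

/-- `(W,R)` is a bounded morphic image of `(W',R')`. -/
def IsBMImage {α β : Type*} (W : Set β) (R : β → β → Prop)
    (W' : Set α) (R' : α → α → Prop) : Prop :=
  ∃ f : α → β, IsBoundedMorphism W' R' W R f ∧ f '' W' = W

/-- Worlds of the flower F_m^n (m ≥ 1, n ≥ -1). -/
def flowerW (m n : ℤ) : Set ℤ :=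
  if n = -1 then {i | 1 ≤ i ∧ i ≤ m} else {i | 0 ≤ i ∧ i ≤ m + n}

/-- Accessibility relation of the flower F_m^n. -/
def flowerR (m n : ℤ) (i j : ℤ) : Prop :=
  if n = -1 then 1 ≤ i ∧ i ≤ m ∧ 1 ≤ j ∧ j ≤ m
  else (i = 0 ∧ 1 ≤ j ∧ j ≤ m) ∨ (1 ≤ i ∧ i ≤ m + n ∧ 1 ≤ j ∧ j ≤ m + n)

/-- If (W,R) is Euclidean, n ∈ ℕ, and there is a surjective bounded
morphism f from the subframe generated by s onto the flower F_m^n with f(s) = 0,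
then W_s = {s} ∪ C, R_s = ({s} × B) ∪ (C × C) with B ⊆ C, s ∉ C, |B| ≥ m, |C \ B| ≥ n. -/
theorem stmt11 {W : Type*} [Nonempty W] (R : W → W → Prop)
    (heucl : ∀ s t u : W, R s t → R s u → R t u ∧ R u t)
    (s : W) (m n : ℕ) (hm : 1 ≤ m) (f : W → ℤ)
    (hf : IsBoundedMorphism {t | Relation.ReflTransGen R s t} R
      (flowerW (m : ℤ) (n : ℤ)) (flowerR (m : ℤ) (n : ℤ)) f)
    (hsurj : f '' {t | Relation.ReflTransGen R s t} = flowerW (m : ℤ) (n : ℤ))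
    (hfs : f s = 0) :
    ∃ B C : Set W, B ⊆ C ∧ s ∉ C ∧
      {t | Relation.ReflTransGen R s t} = insert s C ∧
      (∀ x ∈ {t | Relation.ReflTransGen R s t}, ∀ y ∈ {t | Relation.ReflTransGen R s t},
        (R x y ↔ (x = s ∧ y ∈ B) ∨ (x ∈ C ∧ y ∈ C))) ∧
      (m : Cardinal) ≤ Cardinal.mk B ∧ (n : Cardinal) ≤ Cardinal.mk ↥(C \ B) := by
  classical
  obtain ⟨hmemf, hforth, hback⟩ := hf
  have hn1 : (n : ℤ) ≠ -1 := by omega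
  have hsWs : s ∈ {t | Relation.ReflTransGen R s t} := Relation.ReflTransGen.refl
  have hrefl : ∀ a b, R a b → R b b := fun a b h => (heucl a b b h h).1
  have htrans : ∀ a b c, R a a → R a b → R b c → R a c := by
    intro a b c haa hab hbc
    have hba := (heucl a b a hab haa).1
    exact (heucl b a c hba hbc).1
  have hreach : ∀ u t, R u u → Relation.ReflTransGen R u t → R u t := by
    intro u t huu h
    induction h with
    | refl => exact huu
    | tail _ h2 ih => exact htrans u _ _ huu ih h2
  have hWC : ∀ x, Relation.ReflTransGen R s x →
      x = s ∨ ∃ u, R s u ∧ Relation.ReflTransGen R u x := by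
    intro x hx
    induction hx with
    | refl => exact Or.inl rfl
    | tail _ h2 ih =>
      rcases ih with rfl | ⟨u, hsu, hub⟩
      · exact Or.inr ⟨_, h2, Relation.ReflTransGen.refl⟩
      · exact Or.inr ⟨u, hsu, hub.tail h2⟩
  have hclique : ∀ x y, (∃ u, R s u ∧ Relation.ReflTransGen R u x) →
      (∃ u, R s u ∧ Relation.ReflTransGen R u y) → R x y := by
    rintro x y ⟨u, hsu, hux⟩ ⟨v, hsv, hvy⟩
    have huu := hrefl s u hsu
    have hux' := hreach u x huu hux
    have hxx := hrefl u x hux'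
    have hxu := (heucl u x u hux' huu).1
    have huv := (heucl s u v hsu hsv).1
    have hxv := htrans x u v hxx hxu huv
    have hvy' := hreach v y (hrefl s v hsv) hvy
    exact htrans x v y hxx hxv hvy'
  refine ⟨{t | R s t}, {t | ∃ u, R s u ∧ Relation.ReflTransGen R u t}, ?_, ?_, ?_, ?_, ?_, ?_⟩
  · exact fun t ht => ⟨t, ht, Relation.ReflTransGen.refl⟩
  · intro hsC
    have hss : R s s := hclique s s hsC hsC
    have := hforth s hsWs s hsWs hss
    rw [hfs] at this
    simp only [flowerR, if_neg hn1] at this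
    omega
  · ext t
    constructor
    · intro ht
      rcases hWC t ht with rfl | h
      · exact Set.mem_insert _ _
      · exact Set.mem_insert_iff.2 (Or.inr h)
    · rintro (rfl | ⟨u, hsu, hut⟩)
      · exact Relation.ReflTransGen.refl
      · exact Relation.ReflTransGen.head hsu hut
  · intro x hx y hy
    constructor
    · intro hxy
      rcases hWC x hx with rfl | hxC
      · exact Or.inl ⟨rfl, hxy⟩
      · exact Or.inr ⟨hxC, hxC.imp fun u hu => ⟨hu.1, hu.2.tail hxy⟩⟩
    · rintro (⟨rfl, hy'⟩ | ⟨hxC, hyC⟩)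
      · exact hy'
      · exact hclique x y hxC hyC
  · -- m ≤ |B|
    have hex : ∀ i : Fin m, ∃ y, Relation.ReflTransGen R s y ∧ R s y ∧ f y = (i : ℤ) + 1 := by
      intro i
      have hiw : ((i : ℤ) + 1) ∈ flowerW (m : ℤ) (n : ℤ) := by
        simp only [flowerW, if_neg hn1, Set.mem_setOf_eq]
        have := i.isLt
        omega
      have hiR : flowerR (m : ℤ) (n : ℤ) (f s) ((i : ℤ) + 1) := by
        rw [hfs]
        simp only [flowerR, if_neg hn1]
        refine Or.inl ⟨trivial, ?_, ?_⟩ <;> (have := i.isLt; omega)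
      obtain ⟨y, hy1, hy2, hy3⟩ := hback s hsWs _ hiw hiR
      exact ⟨y, hy1, hy2, hy3⟩
    choose g hg1 hg2 hg3 using hex
    have hinj : Function.Injective
        (fun i : ULift.{_,0} (Fin m) => (⟨g i.down, hg2 i.down⟩ : {t | R s t})) := by
      intro i j h
      have hfeq : f (g i.down) = f (g j.down) := by
        have := congrArg Subtype.val h
        simp only at this
        rw [this]
      rw [hg3, hg3] at hfeq
      have : (i.down : ℕ) = (j.down : ℕ) := by omega
      exact congrArg ULift.up (Fin.ext this)
    have hle := Cardinal.mk_le_of_injective hinj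
    simp at hle
    exact hle
  · -- n ≤ |C \ B|
    have hex : ∀ i : Fin n, ∃ y, Relation.ReflTransGen R s y ∧ f y = (m : ℤ) + 1 + (i : ℤ) := by
      intro i
      have hiw : ((m : ℤ) + 1 + (i : ℤ)) ∈ flowerW (m : ℤ) (n : ℤ) := by
        simp only [flowerW, if_neg hn1, Set.mem_setOf_eq]
        have := i.isLt
        omega
      rw [← hsurj] at hiw
      obtain ⟨y, hy1, hy2⟩ := hiw
      exact ⟨y, hy1, hy2⟩
    choose g hg1 hg2 using hex
    have hgmem : ∀ i : Fin n,
        g i ∈ {t | ∃ u, R s u ∧ Relation.ReflTransGen R u t} \ {t | R s t} := by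
      intro i
      constructor
      · rcases hWC _ (hg1 i) with h | h
        · exfalso
          have h2 := hg2 i
          rw [h, hfs] at h2
          omega
        · exact h
      · intro hR
        have := hforth s hsWs _ (hg1 i) hR
        rw [hfs, hg2] at this
        simp only [flowerR, if_neg hn1] at this
        omega
    have hinj : Function.Injective (fun i : ULift.{_,0} (Fin n) => (⟨g i.down, hgmem i.down⟩ :
        ({t | ∃ u, R s u ∧ Relation.ReflTransGen R u t} \ {t | R s t} : Set W))) := by
      intro i j h
      have hfeq : f (g i.down) = f (g j.down) := by
        have := congrArg Subtype.val h
        simp only at this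
        rw [this]
      rw [hg2, hg2] at hfeq
      have : (i.down : ℕ) = (j.down : ℕ) := by omega
      exact congrArg ULift.up (Fin.ext this)
    have hle := Cardinal.mk_le_of_injective hinj
    simp at hle
    exact hle
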